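/- Let u, v : ℝ^N → ℂ (with v = u·η for a real-valued η), A : ℝ^N → ℝ^N, L > 0, β ≥ 1, and set u_L = min(|u|, L). Then for all x, y: Re[(u(x) − u(y)e^{iθ})·conj(u(x)u_L(x)^{2(β−1)} − u(y)u_L(y)^{2(β−1)} e^{iθ})] ≥ (|u(x)| − |u(y)|)(|u(x)| u_L(x)^{2(β−1)} − |u(y)| u_L(y)^{2(β−1)}), where θ = A((x+y)/2)·(x−y). -/

import Mathlib

theorem moser_test_function_real_part_lower_bound (N : ℕ)
    (u : EuclideanSpace ℝ (Fin N) → ℂ)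
    (A : EuclideanSpace ℝ (Fin N) → EuclideanSpace ℝ (Fin N))
    (L β : ℝ) (hL : 0 < L) (hβ : 1 ≤ β)
    (uL : EuclideanSpace ℝ (Fin N) → ℝ)
    (huL : ∀ z, uL z = min (‖u z‖) L)
    (x y : EuclideanSpace ℝ (Fin N))
    (θ : ℝ) (hθ : θ = (inner ℝ (A ((2 : ℝ)⁻¹ • (x + y))) (x - y) : ℝ)) :
    (‖u x‖ - ‖u y‖) *
        (‖u x‖ * uL x ^ (2 * (β - 1)) - ‖u y‖ * uL y ^ (2 * (β - 1))) ≤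
      ((u x - u y * Complex.exp ((θ : ℂ) * Complex.I)) *
          (starRingEnd ℂ) (u x * ((uL x ^ (2 * (β - 1)) : ℝ) : ℂ) -
            u y * ((uL y ^ (2 * (β - 1)) : ℝ) : ℂ) * Complex.exp ((θ : ℂ) * Complex.I))).re := by
  set E : ℂ := Complex.exp ((θ : ℂ) * Complex.I) with hEdef
  set a : ℝ := ‖u x‖
  set b : ℝ := ‖u y‖
  set p : ℝ := uL x ^ (2 * (β - 1)) with hpdef
  set q : ℝ := uL y ^ (2 * (β - 1)) with hqdef
  have hp : 0 ≤ p := Real.rpow_nonneg (by rw [huL]; exact le_min (norm_nonneg _) hL.le) _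
  have hq : 0 ≤ q := Real.rpow_nonneg (by rw [huL]; exact le_min (norm_nonneg _) hL.le) _
  have hE : ‖E‖ = 1 := Complex.norm_exp_ofReal_mul_I θ
  have hEE : E * (starRingEnd ℂ) E = 1 := by
    rw [Complex.mul_conj, Complex.normSq_eq_norm_sq, hE]; norm_num
  set r : ℝ := (u x * (starRingEnd ℂ) (u y) * (starRingEnd ℂ) E).re with hrdef
  have hr : r ≤ a * b := by
    calc r ≤ ‖u x * (starRingEnd ℂ) (u y) * (starRingEnd ℂ) E‖ :=
          Complex.re_le_norm _
      _ = a * b := by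
          rw [norm_mul, norm_mul, Complex.norm_conj, Complex.norm_conj, hE, mul_one]
  have hconj : (u y * E * (starRingEnd ℂ) (u x)).re = r := by
    have h : u y * E * (starRingEnd ℂ) (u x) =
        (starRingEnd ℂ) (u x * (starRingEnd ℂ) (u y) * (starRingEnd ℂ) E) := by
      simp [map_mul]; ring
    rw [h, Complex.conj_re]
  have key : ((u x - u y * E) *
      (starRingEnd ℂ) (u x * (p : ℂ) - u y * (q : ℂ) * E)).re
      = p * a ^ 2 + q * b ^ 2 - (p + q) * r := by
    have expand : (u x - u y * E) * (starRingEnd ℂ) (u x * (p : ℂ) - u y * (q : ℂ) * E)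
        = (p : ℂ) * (u x * (starRingEnd ℂ) (u x))
          + (q : ℂ) * ((u y * (starRingEnd ℂ) (u y)) * (E * (starRingEnd ℂ) E))
          - (q : ℂ) * (u x * (starRingEnd ℂ) (u y) * (starRingEnd ℂ) E)
          - (p : ℂ) * (u y * E * (starRingEnd ℂ) (u x)) := by
      simp only [map_sub, map_mul, Complex.conj_ofReal]
      ring
    rw [expand, hEE]
    simp only [Complex.sub_re, Complex.add_re, mul_one, Complex.mul_conj,
      Complex.normSq_eq_norm_sq, Complex.re_ofReal_mul, Complex.ofReal_re, hconj, ← hrdef]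
    ring
  rw [key]
  nlinarith [mul_le_mul_of_nonneg_left hr (add_nonneg hp hq)]
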